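/- Let d ≥ 2, let H = (V, E) be a d-sparse finite graph with d-critical cover 𝒳, and suppose every d-critical component of H has at least d + 2 vertices. Put a_j = Σ_{U ∈ Θ_j(𝒳)} (d_𝒳(U) − 1) for 0 ≤ j ≤ d. Then for every 0 ≤ k ≤ d − 2 such that Θ_k(𝒳) ≠ ∅ (for k = 0 this means |𝒳| ≥ 2), we have (d − k)(k + 1) a_{k+1} − binom(k+2, 2) a_{k+2} < binom(d+1−k, 2) a_k. -/

import Mathlib

open Finset
open scoped Classical

variable {α : Type*} [DecidableEq α]

/-- The set of edges of `E` with both endpoints in `X`. -/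
noncomputable def inducedEdges (E : Finset (Sym2 α)) (X : Finset α) : Finset (Sym2 α) :=
  E.filter fun e => ∀ v ∈ e, v ∈ X

/-- `i_G(X)`: the number of edges of `E` with both endpoints in `X`. -/
noncomputable def iG (E : Finset (Sym2 α)) (X : Finset α) : ℕ :=
  (inducedEdges E X).card

/-- `E` is a valid edge set on the vertex set `V`: edges are loopless and join vertices of `V`. -/
def ValidOn (V : Finset α) (E : Finset (Sym2 α)) : Prop :=
  ∀ e ∈ E, ¬ e.IsDiag ∧ ∀ v ∈ e, v ∈ V

/-- The graph `(V, E)` is `d`-sparse: every `X ⊆ V` with `|X| ≥ d` satisfies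
`i(X) ≤ d|X| - (d+1 choose 2)`. -/
noncomputable def Sparse (d : ℕ) (V : Finset α) (E : Finset (Sym2 α)) : Prop :=
  ∀ X ⊆ V, d ≤ X.card → iG E X + Nat.choose (d + 1) 2 ≤ d * X.card

/-- `(U, F)` is a subgraph of `(V, E)`. -/
def IsSubgraph (V : Finset α) (E : Finset (Sym2 α)) (U : Finset α) (F : Finset (Sym2 α)) :
    Prop :=
  U ⊆ V ∧ F ⊆ E ∧ ∀ e ∈ F, ∀ v ∈ e, v ∈ U

/-- The graph `(U, F)` is `d`-critical: either `|U| = 2` and `|F| = 1`, or `|U| ≥ d + 2` and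
`|F| = d|U| - (d+1 choose 2)`. -/
def Critical (d : ℕ) (U : Finset α) (F : Finset (Sym2 α)) : Prop :=
  (U.card = 2 ∧ F.card = 1) ∨
  (d + 2 ≤ U.card ∧ F.card + Nat.choose (d + 1) 2 = d * U.card)

/-- `(U, F)` is a `d`-critical subgraph of `(V, E)`. -/
def CritSubgraph (d : ℕ) (V : Finset α) (E : Finset (Sym2 α)) (U : Finset α)
    (F : Finset (Sym2 α)) : Prop :=
  IsSubgraph V E U F ∧ Critical d U F

/-- `(U, F)` is a `d`-critical component of `(V, E)`: a `d`-critical subgraph not properly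
contained in any other `d`-critical subgraph. -/
def CritComponent (d : ℕ) (V : Finset α) (E : Finset (Sym2 α)) (U : Finset α)
    (F : Finset (Sym2 α)) : Prop :=
  CritSubgraph d V E U F ∧
  ∀ U' F', CritSubgraph d V E U' F' → U ⊆ U' → F ⊆ F' → U = U' ∧ F = F'

/-- The `d`-critical cover of `(V, E)`: the family of vertex sets of its `d`-critical
components. -/
noncomputable def critCover (d : ℕ) (V : Finset α) (E : Finset (Sym2 α)) :
    Finset (Finset α) :=
  V.powerset.filter fun U => ∃ F, CritComponent d V E U F

/-- `d_𝒳(W)`: the number of members of the family `𝒳` containing `W`. -/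
def degX (𝒳 : Finset (Finset α)) (W : Finset α) : ℕ :=
  (𝒳.filter fun X => W ⊆ X).card

/-- `Θ_k(𝒳)`: the set of `k`-hinges of `𝒳`, i.e. `k`-element subsets of `V` lying in at least
two members of `𝒳`.  (For `k = 0` this is `{∅}` exactly when `|𝒳| ≥ 2`.) -/
noncomputable def theta (V : Finset α) (𝒳 : Finset (Finset α)) (k : ℕ) :
    Finset (Finset α) :=
  V.powerset.filter fun W => W.card = k ∧ 2 ≤ degX 𝒳 W

/-- `𝒳` is a cover of `(V, E)`: every member has at least two vertices and every edge is
induced by some member. -/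
def IsCover (E : Finset (Sym2 α)) (𝒳 : Finset (Finset α)) : Prop :=
  (∀ X ∈ 𝒳, 2 ≤ X.card) ∧ ∀ e ∈ E, ∃ X ∈ 𝒳, ∀ v ∈ e, v ∈ X

/-- `𝒳` is `t`-thin: any two distinct members intersect in at most `t` vertices. -/
def Thin (t : ℕ) (𝒳 : Finset (Finset α)) : Prop :=
  ∀ X ∈ 𝒳, ∀ Y ∈ 𝒳, X ≠ Y → (X ∩ Y).card ≤ t

/-- `(V, F)` is a maximal `d`-sparse (spanning) subgraph of `(V, E)`. -/
noncomputable def MaxSparse (d : ℕ) (V : Finset α) (E F : Finset (Sym2 α)) : Prop :=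
  F ⊆ E ∧ Sparse d V F ∧ ∀ e ∈ E, e ∉ F → ¬ Sparse d V (insert e F)

set_option linter.unusedSectionVars false

private lemma two_mul_choose_two (n : ℕ) : 2 * n.choose 2 = n * (n - 1) := by
  induction n with
  | zero => rfl
  | succ m ih =>
    have h : Nat.choose (m+1) 2 = m + Nat.choose m 2 := by
      rw [Nat.choose_succ_succ, Nat.choose_one_right]
    rw [h, Nat.mul_add, ih]
    cases m with
    | zero => rfl
    | succ p => simp [Nat.succ_sub_one]; ring

private lemma sum_le_sum_inj {β γ : Type*} [DecidableEq γ] {s : Finset β} {t : Finset γ}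
    (f : β → ℤ) (g : γ → ℤ) (ι : β → γ)
    (hmap : ∀ b ∈ s, ι b ∈ t)
    (hinj : ∀ b₁ ∈ s, ∀ b₂ ∈ s, ι b₁ = ι b₂ → b₁ = b₂)
    (hfg : ∀ b ∈ s, f b ≤ g (ι b))
    (hg : ∀ c ∈ t, 0 ≤ g c) :
    ∑ b ∈ s, f b ≤ ∑ c ∈ t, g c := by
  calc ∑ b ∈ s, f b ≤ ∑ b ∈ s, g (ι b) := Finset.sum_le_sum hfg
    _ = ∑ c ∈ s.image ι, g c := (Finset.sum_image hinj).symm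
    _ ≤ ∑ c ∈ t, g c := Finset.sum_le_sum_of_subset_of_nonneg
        (by intro c hc; obtain ⟨b, hb, rfl⟩ := Finset.mem_image.mp hc; exact hmap b hb)
        (fun c hc _ => hg c hc)

private lemma sum_card_filter_swap {β γ : Type*} (s : Finset β) (t : Finset γ) (p : β → γ → Prop)
    [∀ b, DecidablePred (p b)] [∀ c, DecidablePred (fun b => p b c)] :
    ∑ b ∈ s, #(t.filter (p b)) = ∑ c ∈ t, #(s.filter (fun b => p b c)) := by
  simp_rw [Finset.card_filter]
  exact Finset.sum_comm

private lemma mem_theta' {V : Finset α} {𝒳 : Finset (Finset α)} {k : ℕ} {W : Finset α} :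
    W ∈ theta V 𝒳 k ↔ W ⊆ V ∧ W.card = k ∧ 2 ≤ degX 𝒳 W := by
  simp [theta, Finset.mem_filter, Finset.mem_powerset, and_assoc]

private lemma degX_mono (𝒳 : Finset (Finset α)) {W W' : Finset α} (h : W ⊆ W') :
    degX 𝒳 W' ≤ degX 𝒳 W := by
  apply Finset.card_le_card
  intro X hX
  simp only [Finset.mem_filter] at *
  exact ⟨hX.1, h.trans hX.2⟩

private lemma out_spec (e : Sym2 α) : e = s((Quot.out e).1, (Quot.out e).2) := by
  conv_lhs => rw [← Quot.out_eq e]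

private lemma iG_le_choose {E : Finset (Sym2 α)} (hE : ∀ e ∈ E, ¬ e.IsDiag) (U : Finset α) :
    iG E U ≤ U.card.choose 2 := by
  rw [← Finset.card_powersetCard 2 U]
  apply Finset.card_le_card_of_injOn (fun e => {(Quot.out e).1, (Quot.out e).2})
  · intro e he
    simp only [inducedEdges, Finset.mem_coe, Finset.mem_filter] at he
    have hd : ¬ e.IsDiag := hE e he.1
    rw [out_spec e, Sym2.mk_isDiag_iff] at hd
    dsimp only
    rw [Finset.mem_coe, Finset.mem_powersetCard]
    constructor
    · intro v hv
      simp only [Finset.mem_insert, Finset.mem_singleton] at hv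
      apply he.2
      rw [out_spec e, Sym2.mem_iff]; exact hv
    · rw [Finset.card_insert_of_notMem (by simpa using hd), Finset.card_singleton]
  · intro e1 he1 e2 he2 hset
    simp only [Finset.coe_mem, inducedEdges, Finset.mem_coe, Finset.mem_filter] at he1 he2
    have hd1 : (Quot.out e1).1 ≠ (Quot.out e1).2 := by
      have := hE e1 he1.1; rw [out_spec e1, Sym2.mk_isDiag_iff] at this; exact this
    have hd2 : (Quot.out e2).1 ≠ (Quot.out e2).2 := by
      have := hE e2 he2.1; rw [out_spec e2, Sym2.mk_isDiag_iff] at this; exact this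
    have hset' : ({(Quot.out e1).1, (Quot.out e1).2} : Finset α)
        = {(Quot.out e2).1, (Quot.out e2).2} := hset
    have h1 : (Quot.out e1).1 ∈ ({(Quot.out e2).1, (Quot.out e2).2} : Finset α) := by
      rw [← hset']; simp
    have h2 : (Quot.out e1).2 ∈ ({(Quot.out e2).1, (Quot.out e2).2} : Finset α) := by
      rw [← hset']; simp
    simp only [Finset.mem_insert, Finset.mem_singleton] at h1 h2
    rw [out_spec e1, out_spec e2, Sym2.eq_iff]
    rcases h1 with h1 | h1 <;> rcases h2 with h2 | h2 <;>
      first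
      | (exact Or.inl ⟨h1, h2⟩)
      | (exact Or.inr ⟨h1, h2⟩)
      | (exact absurd (h1.trans h2.symm) hd1)

private noncomputable def XW (𝒳 : Finset (Finset α)) (W : Finset α) : Finset (Finset α) :=
  𝒳.filter (fun X => W ⊆ X)

private noncomputable def YW (𝒳 : Finset (Finset α)) (W : Finset α) : Finset α :=
  (XW 𝒳 W).biUnion id

private noncomputable def deg2 (𝒳 : Finset (Finset α)) (W : Finset α) (e : Sym2 α) : ℕ :=
  ((XW 𝒳 W).filter (fun X => ∀ v ∈ e, v ∈ X)).card

private lemma card_XW (𝒳 : Finset (Finset α)) (W : Finset α) : (XW 𝒳 W).card = degX 𝒳 W := rfl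

private lemma deg2_eq {𝒳 : Finset (Finset α)} {W : Finset α} {a b : α} :
    deg2 𝒳 W s(a,b) = degX 𝒳 (insert a (insert b W)) := by
  unfold deg2 degX XW
  rw [Finset.filter_filter]
  apply congrArg
  apply Finset.filter_congr
  intro X _
  simp only [Sym2.mem_iff, Finset.insert_subset_iff, eq_iff_iff]
  constructor
  · rintro ⟨h1, h2⟩
    exact ⟨h2 a (Or.inl rfl), h2 b (Or.inr rfl), h1⟩
  · rintro ⟨ha, hb, h1⟩
    refine ⟨h1, ?_⟩
    rintro v (rfl | rfl) <;> assumption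

private lemma perW {d k : ℕ} {V : Finset α} {E : Finset (Sym2 α)} {𝒳 : Finset (Finset α)}
    (hd : 2 ≤ d) (hval : ValidOn V E) (hsp : Sparse d V E)
    (h𝒳 : 𝒳 = critCover d V E)
    (hbig : ∀ U F, CritComponent d V E U F → d + 2 ≤ U.card)
    {W : Finset α} (hW : W ∈ theta V 𝒳 k) :
    (d : ℤ) * k * ((degX 𝒳 W : ℤ) - 1)
      + d * (∑ v ∈ YW 𝒳 W \ W, ((degX 𝒳 (insert v W) : ℤ) - 1)) + 1
      ≤ ((d+1).choose 2 : ℤ) * ((degX 𝒳 W : ℤ) - 1)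
        + ∑ e ∈ E.filter (fun e => 2 ≤ deg2 𝒳 W e), ((deg2 𝒳 W e : ℤ) - 1) := by
  obtain ⟨hWV, hWk, hm⟩ := mem_theta'.mp hW
  have hmem : ∀ X ∈ 𝒳, X ⊆ V ∧ d + 2 ≤ X.card ∧ d * X.card ≤ iG E X + (d+1).choose 2 := by
    intro X hX
    rw [h𝒳] at hX
    simp only [critCover, Finset.mem_filter, Finset.mem_powerset] at hX
    obtain ⟨hXV, F, hF⟩ := hX
    have hcard := hbig X F hF
    refine ⟨hXV, hcard, ?_⟩
    rcases hF.1.2 with ⟨h2, _⟩ | ⟨_, hEq⟩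
    · omega
    · have hsub : F ⊆ inducedEdges E X := by
        intro e he
        simp only [inducedEdges, Finset.mem_filter]
        exact ⟨hF.1.1.2.1 he, hF.1.1.2.2 e he⟩
      have := Finset.card_le_card hsub
      unfold iG
      omega
  have hXWm : ∀ X ∈ XW 𝒳 W, X ∈ 𝒳 ∧ W ⊆ X := fun X hX => by
    simpa [XW, Finset.mem_filter] using hX
  have hsubY : ∀ X ∈ XW 𝒳 W, X ⊆ YW 𝒳 W := by
    intro X hX
    exact Finset.subset_biUnion_of_mem id hX
  have hYV : YW 𝒳 W ⊆ V := by
    intro v hv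
    obtain ⟨X, hX, hvX⟩ := Finset.mem_biUnion.mp hv
    exact (hmem X (hXWm X hX).1).1 hvX
  have hcard2 : 2 ≤ (XW 𝒳 W).card := by rw [card_XW]; exact hm
  obtain ⟨X0, hX0, X1, hX1, hne01⟩ := Finset.one_lt_card.mp (show 1 < (XW 𝒳 W).card by omega)
  have hYcard : d + 2 ≤ (YW 𝒳 W).card :=
    le_trans (hmem X0 (hXWm X0 hX0).1).2.1 (Finset.card_le_card (hsubY X0 hX0))
  have hWY : W ⊆ YW 𝒳 W := (hXWm X0 hX0).2.trans (hsubY X0 hX0)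
  have hstrict : iG E (YW 𝒳 W) + (d+1).choose 2 + 1 ≤ d * (YW 𝒳 W).card := by
    have hle := hsp (YW 𝒳 W) hYV (by omega)
    rcases Nat.lt_or_ge (iG E (YW 𝒳 W) + (d+1).choose 2) (d * (YW 𝒳 W).card) with h | h
    · omega
    have heq : (inducedEdges E (YW 𝒳 W)).card + (d+1).choose 2 = d * (YW 𝒳 W).card := by
      unfold iG at hle h; omega
    have hcs : CritSubgraph d V E (YW 𝒳 W) (inducedEdges E (YW 𝒳 W)) := by
      refine ⟨⟨hYV, Finset.filter_subset _ _, ?_⟩, Or.inr ⟨hYcard, heq⟩⟩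
      intro e he v hv
      exact (Finset.mem_filter.mp he).2 v hv
    have hcomp : ∀ X ∈ XW 𝒳 W, X = YW 𝒳 W := by
      intro X hX
      have hX𝒳 := (hXWm X hX).1
      rw [h𝒳] at hX𝒳
      simp only [critCover, Finset.mem_filter, Finset.mem_powerset] at hX𝒳
      obtain ⟨hXV, F, hF⟩ := hX𝒳
      refine (hF.2 _ _ hcs (hsubY X hX) ?_).1
      intro e he
      simp only [inducedEdges, Finset.mem_filter]
      exact ⟨hF.1.1.2.1 he, fun v hv => hsubY X hX (hF.1.1.2.2 e he v hv)⟩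
    exact absurd ((hcomp X0 hX0).trans (hcomp X1 hX1).symm) hne01
  -- counting
  have h7 : ∑ X ∈ XW 𝒳 W, d * X.card
      ≤ (∑ X ∈ XW 𝒳 W, iG E X) + (XW 𝒳 W).card * (d+1).choose 2 := by
    calc ∑ X ∈ XW 𝒳 W, d * X.card ≤ ∑ X ∈ XW 𝒳 W, (iG E X + (d+1).choose 2) :=
          Finset.sum_le_sum (fun X hX => (hmem X (hXWm X hX).1).2.2)
      _ = _ := by rw [Finset.sum_add_distrib, Finset.sum_const, smul_eq_mul]
  have h8 : ∑ X ∈ XW 𝒳 W, iG E X = ∑ e ∈ E, deg2 𝒳 W e := by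
    unfold iG inducedEdges deg2
    exact sum_card_filter_swap (XW 𝒳 W) E (fun X e => ∀ v ∈ e, v ∈ X)
  have h9 : ∑ e ∈ E, deg2 𝒳 W e ≤ iG E (YW 𝒳 W)
      + ∑ e ∈ E.filter (fun e => 2 ≤ deg2 𝒳 W e), (deg2 𝒳 W e - 1) := by
    unfold iG inducedEdges
    rw [Finset.card_filter, Finset.sum_filter, ← Finset.sum_add_distrib]
    apply Finset.sum_le_sum
    intro e he
    by_cases h1 : 1 ≤ deg2 𝒳 W e
    · have hY : ∀ v ∈ e, v ∈ YW 𝒳 W := by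
        obtain ⟨X, hX⟩ := Finset.card_pos.mp h1
        intro v hv
        simp only [deg2, Finset.mem_filter] at hX
        exact hsubY X hX.1 (hX.2 v hv)
      rw [if_pos hY]
      by_cases h2 : 2 ≤ deg2 𝒳 W e
      · rw [if_pos h2]; omega
      · rw [if_neg h2]; omega
    · have h0 : deg2 𝒳 W e = 0 := by omega
      rw [h0]
      exact Nat.zero_le _
  -- vertex counting, in ℤ
  have hswap : ∑ X ∈ XW 𝒳 W, X.card
      = ∑ v ∈ YW 𝒳 W, ((XW 𝒳 W).filter (fun X => v ∈ X)).card := by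
    have hc : ∀ X ∈ XW 𝒳 W, X.card = ((YW 𝒳 W).filter (fun v => v ∈ X)).card := by
      intro X hX
      congr 1
      ext v
      simp only [Finset.mem_filter]
      exact ⟨fun h => ⟨hsubY X hX h, h⟩, fun h => h.2⟩
    rw [Finset.sum_congr rfl hc]
    exact sum_card_filter_swap (XW 𝒳 W) (YW 𝒳 W) (fun X v => v ∈ X)

  have honW : ∀ v ∈ W, ((XW 𝒳 W).filter (fun X => v ∈ X)).card = degX 𝒳 W := by
    intro v hv
    rw [Finset.filter_true_of_mem (fun X hX => (hXWm X hX).2 hv)]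
    exact card_XW 𝒳 W
  have hcv : ∀ v ∈ YW 𝒳 W \ W, ((XW 𝒳 W).filter (fun X => v ∈ X)).card
      = degX 𝒳 (insert v W) := by
    intro v hv
    unfold XW degX
    rw [Finset.filter_filter]
    apply congrArg
    apply Finset.filter_congr
    intro X _
    simp only [Finset.insert_subset_iff, eq_iff_iff]
    tauto
  have hk_le : k ≤ (YW 𝒳 W).card := by rw [← hWk]; exact Finset.card_le_card hWY
  have hsdc : (((YW 𝒳 W) \ W).card : ℤ) = ((YW 𝒳 W).card : ℤ) - k := by
    rw [Finset.card_sdiff_of_subset hWY, hWk, Nat.cast_sub hk_le]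
  have h10 : (∑ X ∈ XW 𝒳 W, (X.card : ℤ))
      = ((YW 𝒳 W).card : ℤ) + k * ((degX 𝒳 W : ℤ) - 1)
        + ∑ v ∈ YW 𝒳 W \ W, ((degX 𝒳 (insert v W) : ℤ) - 1) := by
    have hz := congrArg (Nat.cast : ℕ → ℤ) hswap
    push_cast at hz
    rw [hz, ← Finset.sum_sdiff hWY]
    have hA : ∑ v ∈ (YW 𝒳 W) \ W, ((((XW 𝒳 W).filter (fun X => v ∈ X)).card : ℤ))
        = ∑ v ∈ (YW 𝒳 W) \ W, ((degX 𝒳 (insert v W) : ℤ) - 1) + (((YW 𝒳 W) \ W).card : ℤ) := by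
      rw [Finset.sum_sub_distrib, Finset.sum_const, nsmul_eq_mul, mul_one]
      have : ∀ v ∈ (YW 𝒳 W) \ W, ((((XW 𝒳 W).filter (fun X => v ∈ X)).card : ℤ))
          = (degX 𝒳 (insert v W) : ℤ) := fun v hv => by rw [hcv v hv]
      rw [Finset.sum_congr rfl this]
      ring
    have hB : ∑ v ∈ W, ((((XW 𝒳 W).filter (fun X => v ∈ X)).card : ℤ))
        = k * (degX 𝒳 W : ℤ) := by
      have : ∀ v ∈ W, ((((XW 𝒳 W).filter (fun X => v ∈ X)).card : ℤ))
          = (degX 𝒳 W : ℤ) := fun v hv => by rw [honW v hv]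
      rw [Finset.sum_congr rfl this, Finset.sum_const, nsmul_eq_mul, hWk]
    rw [hA, hB, hsdc]
    ring
  -- assemble in ℤ
  have H7 := (Nat.cast_le (α := ℤ)).mpr h7
  push_cast at H7
  have h8' := congrArg (Nat.cast : ℕ → ℤ) h8
  push_cast at h8'
  have H9 : (∑ e ∈ E, (deg2 𝒳 W e : ℤ)) ≤ (iG E (YW 𝒳 W) : ℤ)
      + ∑ e ∈ E.filter (fun e => 2 ≤ deg2 𝒳 W e), ((deg2 𝒳 W e : ℤ) - 1) := by
    have := (Nat.cast_le (α := ℤ)).mpr h9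
    push_cast at this
    refine this.trans (le_of_eq ?_)
    congr 1
    apply Finset.sum_congr rfl
    intro e he
    have h2 : 2 ≤ deg2 𝒳 W e := (Finset.mem_filter.mp he).2
    rw [Nat.cast_sub (by omega)]
    norm_num
  have Hs : (iG E (YW 𝒳 W) : ℤ) + ((d+1).choose 2 : ℤ) + 1 ≤ d * ((YW 𝒳 W).card : ℤ) := by
    exact_mod_cast hstrict
  have HX : ((XW 𝒳 W).card : ℤ) = (degX 𝒳 W : ℤ) := by exact_mod_cast congrArg Nat.cast (card_XW 𝒳 W)
  rw [← Finset.mul_sum, h10, h8', HX] at H7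
  linarith [H7, Hs, H9]

private noncomputable def pick (W : Finset α) (e : Sym2 α) : α × α :=
  if (Quot.out e).1 ∈ W then ((Quot.out e).2, (Quot.out e).1) else Quot.out e

private lemma pick_spec {W : Finset α} {e : Sym2 α} (hdg : ¬ e.IsDiag)
    (h1 : ¬ ∀ v ∈ e, v ∈ W) (h2 : ¬ ∀ v ∈ e, v ∉ W) :
    (pick W e).1 ∉ W ∧ (pick W e).2 ∈ W ∧ e = s((pick W e).1, (pick W e).2) := by
  push_neg at h1 h2
  obtain ⟨x, hxe, hxW⟩ := h1
  obtain ⟨y, hye, hyW⟩ := h2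
  set a := (Quot.out e).1 with ha
  set b := (Quot.out e).2 with hb
  have hout : e = s(a, b) := out_spec e
  have hpick : pick W e = if a ∈ W then (b, a) else (a, b) := rfl
  rw [hout, Sym2.mem_iff] at hxe hye
  by_cases haW : a ∈ W
  · have hbW : b ∉ W := by
      rcases hxe with rfl | rfl
      · exact absurd haW hxW
      · exact hxW
    rw [hpick, if_pos haW]
    exact ⟨hbW, haW, hout.trans Sym2.eq_swap⟩
  · have hbW : b ∈ W := by
      rcases hye with rfl | rfl
      · exact absurd hyW haW
      · exact hyW
    rw [hpick, if_neg haW]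
    exact ⟨haW, hbW, hout⟩

private lemma nonneg_on_theta {V : Finset α} {𝒳 : Finset (Finset α)} {j : ℕ}
    {U : Finset α} (hU : U ∈ theta V 𝒳 j) : (0:ℤ) ≤ (degX 𝒳 U : ℤ) - 1 := by
  have := (mem_theta'.mp hU).2.2
  have : (2:ℤ) ≤ (degX 𝒳 U : ℤ) := by exact_mod_cast this
  linarith

private lemma choose_identity {d k : ℕ} (hk : k ≤ d) :
    (d+1).choose 2 + k.choose 2 = (d+1-k).choose 2 + d * k := by
  obtain ⟨t, rfl⟩ : ∃ t, d = k + t := ⟨d - k, by omega⟩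
  have e2 : k + t + 1 - k = t + 1 := by omega
  rw [e2]
  have h1 := two_mul_choose_two (k + t + 1)
  have h2 := two_mul_choose_two k
  have h3 := two_mul_choose_two (t + 1)
  simp only [Nat.add_sub_cancel] at h1 h3
  cases k with
  | zero => norm_num [Nat.choose_eq_zero_of_lt]
  | succ k' =>
    simp only [Nat.succ_sub_one] at h2
    have hdbl : 2 * ((k'+1+t+1).choose 2 + (k'+1).choose 2)
        = 2 * ((t+1).choose 2 + (k'+1+t) * (k'+1)) := by
      rw [Nat.mul_add, Nat.mul_add, h1, h2, h3]
      ring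
    exact Nat.eq_of_mul_eq_mul_left (by norm_num) hdbl

/-- Lemma 3.3(a) of the paper. -/
theorem stmt6 (d k : ℕ) (hd : 2 ≤ d) (hk : k ≤ d - 2)
    (V : Finset α) (E : Finset (Sym2 α)) (hval : ValidOn V E) (hsp : Sparse d V E)
    (𝒳 : Finset (Finset α)) (h𝒳 : 𝒳 = critCover d V E)
    (hbig : ∀ U F, CritComponent d V E U F → d + 2 ≤ U.card)
    (a : ℕ → ℤ) (ha : ∀ j ≤ d, a j = ∑ U ∈ theta V 𝒳 j, ((degX 𝒳 U : ℤ) - 1))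
    (hne : (theta V 𝒳 k).Nonempty) :
    ((d : ℤ) - k) * (k + 1) * a (k + 1) - (Nat.choose (k + 2) 2 : ℤ) * a (k + 2) <
      (Nat.choose (d + 1 - k) 2 : ℤ) * a k := by
  have hk2 : k + 2 ≤ d := by omega
  have hEd : ∀ e ∈ E, ¬ e.IsDiag := fun e he => (hval e he).1
  -- global sum of per-hinge inequalities
  have hglob : (d:ℤ) * k * (∑ W ∈ theta V 𝒳 k, ((degX 𝒳 W : ℤ) - 1))
      + (d:ℤ) * (∑ W ∈ theta V 𝒳 k, ∑ v ∈ YW 𝒳 W \ W, ((degX 𝒳 (insert v W) : ℤ) - 1))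
      + ((theta V 𝒳 k).card : ℤ)
      ≤ ((d+1).choose 2 : ℤ) * (∑ W ∈ theta V 𝒳 k, ((degX 𝒳 W : ℤ) - 1))
        + ∑ W ∈ theta V 𝒳 k, ∑ e ∈ E.filter (fun e => 2 ≤ deg2 𝒳 W e), ((deg2 𝒳 W e : ℤ) - 1) := by
    have hsum := Finset.sum_le_sum (fun W hW => perW (k := k) hd hval hsp h𝒳 hbig hW)
    rw [Finset.sum_add_distrib, Finset.sum_add_distrib, Finset.sum_const, ← Finset.mul_sum,
      ← Finset.mul_sum, Finset.sum_add_distrib, ← Finset.mul_sum] at hsum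
    simpa [nsmul_eq_mul] using hsum
  -- Step 4 : (k+1) * a_{k+1} ≤ inner vertex sum
  have hstep4 : ((k:ℤ)+1) * (∑ U ∈ theta V 𝒳 (k+1), ((degX 𝒳 U : ℤ) - 1))
      ≤ ∑ W ∈ theta V 𝒳 k, ∑ v ∈ YW 𝒳 W \ W, ((degX 𝒳 (insert v W) : ℤ) - 1) := by
    have hL : ((k:ℤ)+1) * (∑ U ∈ theta V 𝒳 (k+1), ((degX 𝒳 U : ℤ) - 1))
        = ∑ U ∈ theta V 𝒳 (k+1), ∑ v ∈ U, ((degX 𝒳 U : ℤ) - 1) := by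
      rw [Finset.mul_sum]
      apply Finset.sum_congr rfl
      intro U hU
      rw [Finset.sum_const, nsmul_eq_mul, (mem_theta'.mp hU).2.1]
      push_cast
      ring
    rw [hL, Finset.sum_sigma' (theta V 𝒳 (k+1)) (fun U => U)
        (fun U _ => ((degX 𝒳 U : ℤ) - 1)),
      Finset.sum_sigma' (theta V 𝒳 k) (fun W => YW 𝒳 W \ W)
        (fun W v => ((degX 𝒳 (insert v W) : ℤ) - 1))]
    apply sum_le_sum_inj _ _ (fun p => ⟨p.1.erase p.2, p.2⟩)
    · rintro ⟨U, v⟩ hp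
      simp only [Finset.mem_sigma] at hp
      dsimp only
      rw [Finset.mem_sigma]
      obtain ⟨hU, hv⟩ := hp
      obtain ⟨hUV, hUk, hUdeg⟩ := mem_theta'.mp hU
      have hWsub : U.erase v ⊆ U := Finset.erase_subset v U
      constructor
      · rw [mem_theta']
        exact ⟨hWsub.trans hUV, by rw [Finset.card_erase_of_mem hv, hUk]; rfl,
          le_trans hUdeg (degX_mono 𝒳 hWsub)⟩
      · rw [Finset.mem_sdiff]
        refine ⟨?_, Finset.notMem_erase v U⟩
        have hpos : 0 < degX 𝒳 U := by omega
        obtain ⟨X, hX⟩ := Finset.card_pos.mp hpos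
        rw [Finset.mem_filter] at hX
        apply Finset.mem_biUnion.mpr
        refine ⟨X, ?_, hX.2 hv⟩
        rw [XW, Finset.mem_filter]
        exact ⟨hX.1, hWsub.trans hX.2⟩
    · rintro ⟨U1, v1⟩ h1 ⟨U2, v2⟩ h2 heq
      simp only [Finset.mem_sigma] at h1 h2
      dsimp only at heq
      rw [Sigma.mk.inj_iff] at heq
      obtain ⟨hW12, hv12⟩ := heq
      have hv : v1 = v2 := eq_of_heq hv12
      subst hv
      have hU : U1 = U2 := by
        rw [← Finset.insert_erase h1.2, ← Finset.insert_erase h2.2, hW12]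
      subst hU
      rfl
    · rintro ⟨U, v⟩ hp
      simp only [Finset.mem_sigma] at hp
      dsimp only
      rw [Finset.insert_erase hp.2]
    · rintro ⟨W, v⟩ hp
      simp only [Finset.mem_sigma, Finset.mem_sdiff] at hp
      dsimp only
      obtain ⟨hW, hvY, hvW⟩ := hp
      obtain ⟨X, hX, hvX⟩ := Finset.mem_biUnion.mp hvY
      rw [XW, Finset.mem_filter] at hX
      have : insert v W ⊆ X := Finset.insert_subset hvX hX.2
      have hpos : 0 < degX 𝒳 (insert v W) := by
        apply Finset.card_pos.mpr
        exact ⟨X, Finset.mem_filter.mpr ⟨hX.1, this⟩⟩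
      have : (1:ℤ) ≤ (degX 𝒳 (insert v W) : ℤ) := by exact_mod_cast hpos
      linarith
  -- split the edge sum into three parts
  have hsplit : ∑ W ∈ theta V 𝒳 k, ∑ e ∈ E.filter (fun e => 2 ≤ deg2 𝒳 W e), ((deg2 𝒳 W e : ℤ) - 1)
      = (∑ W ∈ theta V 𝒳 k, ∑ e ∈ (E.filter (fun e => 2 ≤ deg2 𝒳 W e)).filter
            (fun e => ∀ v ∈ e, v ∈ W), ((deg2 𝒳 W e : ℤ) - 1))
        + (∑ W ∈ theta V 𝒳 k, ∑ e ∈ ((E.filter (fun e => 2 ≤ deg2 𝒳 W e)).filter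
            (fun e => ¬ ∀ v ∈ e, v ∈ W)).filter (fun e => ∀ v ∈ e, v ∉ W),
            ((deg2 𝒳 W e : ℤ) - 1))
        + (∑ W ∈ theta V 𝒳 k, ∑ e ∈ (((E.filter (fun e => 2 ≤ deg2 𝒳 W e)).filter
            (fun e => ¬ ∀ v ∈ e, v ∈ W)).filter (fun e => ¬ ∀ v ∈ e, v ∉ W)),
            ((deg2 𝒳 W e : ℤ) - 1)) := by
    rw [← Finset.sum_add_distrib, ← Finset.sum_add_distrib]
    apply Finset.sum_congr rfl
    intro W _
    rw [add_assoc,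
      Finset.sum_filter_add_sum_filter_not ((E.filter (fun e => 2 ≤ deg2 𝒳 W e)).filter
        (fun e => ¬ ∀ v ∈ e, v ∈ W)) (fun e => ∀ v ∈ e, v ∉ W),
      Finset.sum_filter_add_sum_filter_not (E.filter (fun e => 2 ≤ deg2 𝒳 W e))
        (fun e => ∀ v ∈ e, v ∈ W)]
  -- Part 0 : edges inside W
  have hpart0 : ∑ W ∈ theta V 𝒳 k, ∑ e ∈ (E.filter (fun e => 2 ≤ deg2 𝒳 W e)).filter
        (fun e => ∀ v ∈ e, v ∈ W), ((deg2 𝒳 W e : ℤ) - 1)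
      ≤ (k.choose 2 : ℤ) * (∑ W ∈ theta V 𝒳 k, ((degX 𝒳 W : ℤ) - 1)) := by
    rw [Finset.mul_sum]
    apply Finset.sum_le_sum
    intro W hW
    obtain ⟨hWV, hWk, hm⟩ := mem_theta'.mp hW
    have hdeq : ∀ e ∈ (E.filter (fun e => 2 ≤ deg2 𝒳 W e)).filter (fun e => ∀ v ∈ e, v ∈ W),
        ((deg2 𝒳 W e : ℤ) - 1) = ((degX 𝒳 W : ℤ) - 1) := by
      intro e he
      simp only [Finset.mem_filter] at he
      have : deg2 𝒳 W e = degX 𝒳 W := by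
        unfold deg2 XW degX
        apply congrArg
        rw [Finset.filter_filter]
        apply Finset.filter_congr
        intro X _
        exact ⟨fun h => h.1, fun h => ⟨h, fun v hv => h (he.2 v hv)⟩⟩
      rw [this]
    have hcardb : ((E.filter (fun e => 2 ≤ deg2 𝒳 W e)).filter (fun e => ∀ v ∈ e, v ∈ W)).card
        ≤ k.choose 2 := by
      have hsub : (E.filter (fun e => 2 ≤ deg2 𝒳 W e)).filter (fun e => ∀ v ∈ e, v ∈ W)
          ⊆ inducedEdges E W := by
        intro e he
        simp only [Finset.mem_filter, inducedEdges] at he ⊢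
        exact ⟨he.1.1, he.2⟩
      calc _ ≤ (inducedEdges E W).card := Finset.card_le_card hsub
        _ ≤ (W.card).choose 2 := iG_le_choose hEd W
        _ = k.choose 2 := by rw [hWk]
    rw [Finset.sum_congr rfl hdeq, Finset.sum_const, nsmul_eq_mul]
    exact mul_le_mul_of_nonneg_right (by exact_mod_cast hcardb) (nonneg_on_theta hW)
  -- Part 1 : mixed edges
  have hdegeq : ∀ (W : Finset α) (e : Sym2 α), e = s((pick W e).1, (pick W e).2) →
      (pick W e).2 ∈ W → deg2 𝒳 W e = degX 𝒳 (insert (pick W e).1 W) := by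
    intro W e he' hw
    conv_lhs => rw [he']
    rw [deg2_eq, Finset.insert_eq_self.mpr hw]
  have hpart1 : ∑ W ∈ theta V 𝒳 k, ∑ e ∈ ((E.filter (fun e => 2 ≤ deg2 𝒳 W e)).filter
        (fun e => ¬ ∀ v ∈ e, v ∈ W)).filter (fun e => ¬ ∀ v ∈ e, v ∉ W),
        ((deg2 𝒳 W e : ℤ) - 1)
      ≤ ((k * (k+1) : ℕ) : ℤ) * (∑ U ∈ theta V 𝒳 (k+1), ((degX 𝒳 U : ℤ) - 1)) := by
    have hR : ((k * (k+1) : ℕ) : ℤ) * (∑ U ∈ theta V 𝒳 (k+1), ((degX 𝒳 U : ℤ) - 1))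
        = ∑ U ∈ theta V 𝒳 (k+1), ∑ p ∈ U.offDiag, ((degX 𝒳 U : ℤ) - 1) := by
      rw [Finset.mul_sum]
      apply Finset.sum_congr rfl
      intro U hU
      rw [Finset.sum_const, nsmul_eq_mul, Finset.offDiag_card, (mem_theta'.mp hU).2.1]
      have : (k+1) * (k+1) - (k+1) = k * (k+1) := by rw [Nat.succ_mul, Nat.add_sub_cancel]
      rw [this]
    rw [hR, Finset.sum_sigma' (theta V 𝒳 k)
        (fun W => ((E.filter (fun e => 2 ≤ deg2 𝒳 W e)).filter
          (fun e => ¬ ∀ v ∈ e, v ∈ W)).filter (fun e => ¬ ∀ v ∈ e, v ∉ W))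
        (fun W e => ((deg2 𝒳 W e : ℤ) - 1)),
      Finset.sum_sigma' (theta V 𝒳 (k+1)) (fun U => U.offDiag)
        (fun U _ => ((degX 𝒳 U : ℤ) - 1))]
    have hfacts : ∀ (W : Finset α) (e : Sym2 α), W ∈ theta V 𝒳 k →
        e ∈ ((E.filter (fun e => 2 ≤ deg2 𝒳 W e)).filter
          (fun e => ¬ ∀ v ∈ e, v ∈ W)).filter (fun e => ¬ ∀ v ∈ e, v ∉ W) →
        e ∈ E ∧ 2 ≤ deg2 𝒳 W e ∧ (pick W e).1 ∉ W ∧ (pick W e).2 ∈ W ∧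
          e = s((pick W e).1, (pick W e).2) := by
      intro W e hW he
      simp only [Finset.mem_filter] at he
      obtain ⟨⟨⟨heE, hed⟩, hm1⟩, hm2⟩ := he
      obtain ⟨h1, h2, h3⟩ := pick_spec (hEd e heE) hm1 hm2
      exact ⟨heE, hed, h1, h2, h3⟩
    apply sum_le_sum_inj _ _ (fun p => ⟨insert (pick p.1 p.2).1 p.1, pick p.1 p.2⟩)
    · rintro ⟨W, e⟩ hp
      simp only [Finset.mem_sigma] at hp
      obtain ⟨heE, hed, hv, hw, he'⟩ := hfacts W e hp.1 hp.2
      obtain ⟨hWV, hWk, _⟩ := mem_theta'.mp hp.1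
      dsimp only
      rw [Finset.mem_sigma]
      have hvV : (pick W e).1 ∈ V := by
        have h0 : (pick W e).1 ∈ s((pick W e).1, (pick W e).2) := by
          rw [Sym2.mem_iff]; left; rfl
        rw [← he'] at h0
        exact (hval e heE).2 _ h0
      constructor
      · rw [mem_theta']
        refine ⟨Finset.insert_subset hvV hWV, ?_, ?_⟩
        · rw [Finset.card_insert_of_notMem hv, hWk]
        · rw [← hdegeq W e he' hw]; exact hed
      · rw [Finset.mem_offDiag]
        exact ⟨Finset.mem_insert_self _ _, Finset.mem_insert_of_mem hw,
          fun hcon => hv (hcon ▸ hw)⟩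
    · rintro ⟨W1, e1⟩ h1 ⟨W2, e2⟩ h2 heq
      simp only [Finset.mem_sigma] at h1 h2
      obtain ⟨_, _, hv1, hw1, he1'⟩ := hfacts W1 e1 h1.1 h1.2
      obtain ⟨_, _, hv2, hw2, he2'⟩ := hfacts W2 e2 h2.1 h2.2
      dsimp only at heq
      rw [Sigma.mk.inj_iff] at heq
      obtain ⟨hU12, hp12⟩ := heq
      have hpq : pick W1 e1 = pick W2 e2 := eq_of_heq hp12
      have hW12 : W1 = W2 := by
        have := congrArg (fun S => S.erase (pick W1 e1).1) hU12
        rw [Finset.erase_insert hv1, hpq, Finset.erase_insert hv2] at this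
        exact this
      have he12 : e1 = e2 := by rw [he1', he2', hpq]
      subst hW12; subst he12; rfl
    · rintro ⟨W, e⟩ hp
      simp only [Finset.mem_sigma] at hp
      obtain ⟨_, _, _, hw, he'⟩ := hfacts W e hp.1 hp.2
      dsimp only
      rw [hdegeq W e he' hw]
    · rintro ⟨U, p⟩ hp
      simp only [Finset.mem_sigma] at hp
      exact nonneg_on_theta hp.1
  -- Part 2 : edges outside W
  have hpart2 : ∑ W ∈ theta V 𝒳 k, ∑ e ∈ ((E.filter (fun e => 2 ≤ deg2 𝒳 W e)).filter
        (fun e => ¬ ∀ v ∈ e, v ∈ W)).filter (fun e => ∀ v ∈ e, v ∉ W),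
        ((deg2 𝒳 W e : ℤ) - 1)
      ≤ ((k+2).choose 2 : ℤ) * (∑ U ∈ theta V 𝒳 (k+2), ((degX 𝒳 U : ℤ) - 1)) := by
    have hmid : ∑ W ∈ theta V 𝒳 k, ∑ e ∈ ((E.filter (fun e => 2 ≤ deg2 𝒳 W e)).filter
          (fun e => ¬ ∀ v ∈ e, v ∈ W)).filter (fun e => ∀ v ∈ e, v ∉ W),
          ((deg2 𝒳 W e : ℤ) - 1)
        ≤ ∑ U ∈ theta V 𝒳 (k+2), ∑ e ∈ inducedEdges E U, ((degX 𝒳 U : ℤ) - 1) := by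
      rw [Finset.sum_sigma' (theta V 𝒳 k)
          (fun W => ((E.filter (fun e => 2 ≤ deg2 𝒳 W e)).filter
            (fun e => ¬ ∀ v ∈ e, v ∈ W)).filter (fun e => ∀ v ∈ e, v ∉ W))
          (fun W e => ((deg2 𝒳 W e : ℤ) - 1)),
        Finset.sum_sigma' (theta V 𝒳 (k+2)) (fun U => inducedEdges E U)
          (fun U _ => ((degX 𝒳 U : ℤ) - 1))]
      have hfacts : ∀ (W : Finset α) (e : Sym2 α),
          e ∈ ((E.filter (fun e => 2 ≤ deg2 𝒳 W e)).filter
            (fun e => ¬ ∀ v ∈ e, v ∈ W)).filter (fun e => ∀ v ∈ e, v ∉ W) →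
          e ∈ E ∧ 2 ≤ deg2 𝒳 W e ∧ (Quot.out e).1 ∉ W ∧ (Quot.out e).2 ∉ W ∧
            (Quot.out e).1 ≠ (Quot.out e).2 := by
        intro W e he
        simp only [Finset.mem_filter] at he
        obtain ⟨⟨⟨heE, hed⟩, _⟩, hout⟩ := he
        have hd1 := hEd e heE
        rw [out_spec e, Sym2.mk_isDiag_iff] at hd1
        have ha : (Quot.out e).1 ∈ e := by
          have h0 : (Quot.out e).1 ∈ s((Quot.out e).1, (Quot.out e).2) := by
            rw [Sym2.mem_iff]; left; rfl
          rwa [← out_spec e] at h0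
        have hb : (Quot.out e).2 ∈ e := by
          have h0 : (Quot.out e).2 ∈ s((Quot.out e).1, (Quot.out e).2) := by
            rw [Sym2.mem_iff]; right; rfl
          rwa [← out_spec e] at h0
        exact ⟨heE, hed, hout _ ha, hout _ hb, hd1⟩
      have hdeg : ∀ (W : Finset α) (e : Sym2 α),
          deg2 𝒳 W e = degX 𝒳 (insert (Quot.out e).1 (insert (Quot.out e).2 W)) := by
        intro W e
        conv_lhs => rw [out_spec e]
        rw [deg2_eq]
      apply sum_le_sum_inj _ _
        (fun p => ⟨insert (Quot.out p.2).1 (insert (Quot.out p.2).2 p.1), p.2⟩)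
      · rintro ⟨W, e⟩ hp
        simp only [Finset.mem_sigma] at hp
        obtain ⟨heE, hed, hna, hnb, hab⟩ := hfacts W e hp.2
        obtain ⟨hWV, hWk, _⟩ := mem_theta'.mp hp.1
        dsimp only
        rw [Finset.mem_sigma]
        have hmemU : ∀ v ∈ e, v ∈ insert (Quot.out e).1 (insert (Quot.out e).2 W) := by
          intro v hv
          rw [out_spec e, Sym2.mem_iff] at hv
          rcases hv with rfl | rfl
          · exact Finset.mem_insert_self _ _
          · exact Finset.mem_insert_of_mem (Finset.mem_insert_self _ _)
        constructor
        · rw [mem_theta']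
          refine ⟨?_, ?_, ?_⟩
          · intro v hv
            rw [Finset.mem_insert, Finset.mem_insert] at hv
            rcases hv with rfl | rfl | hv
            · exact (hval e heE).2 _ (by
                have h0 : (Quot.out e).1 ∈ s((Quot.out e).1, (Quot.out e).2) := by
                  rw [Sym2.mem_iff]; left; rfl
                rwa [← out_spec e] at h0)
            · exact (hval e heE).2 _ (by
                have h0 : (Quot.out e).2 ∈ s((Quot.out e).1, (Quot.out e).2) := by
                  rw [Sym2.mem_iff]; right; rfl
                rwa [← out_spec e] at h0)
            · exact hWV hv
          · have hnin : (Quot.out e).1 ∉ insert (Quot.out e).2 W := by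
              rw [Finset.mem_insert]
              rintro (h | h)
              · exact hab h
              · exact hna h
            rw [Finset.card_insert_of_notMem hnin,
              Finset.card_insert_of_notMem hnb, hWk]
          · rw [← hdeg W e]; exact hed
        · rw [inducedEdges, Finset.mem_filter]
          exact ⟨heE, hmemU⟩
      · rintro ⟨W1, e1⟩ h1 ⟨W2, e2⟩ h2 heq
        simp only [Finset.mem_sigma] at h1 h2
        obtain ⟨_, _, hna1, hnb1, hab1⟩ := hfacts W1 e1 h1.2
        dsimp only at heq
        rw [Sigma.mk.inj_iff] at heq
        obtain ⟨hU12, he12⟩ := heq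
        have he : e1 = e2 := eq_of_heq he12
        subst he
        obtain ⟨_, _, hna2, hnb2, _⟩ := hfacts W2 e1 h2.2
        have hW12 : W1 = W2 := by
          have h1' := congrArg (fun S => (S.erase (Quot.out e1).1).erase (Quot.out e1).2)
            hU12
          have hnin1 : (Quot.out e1).1 ∉ insert (Quot.out e1).2 W1 := by
            rw [Finset.mem_insert]
            rintro (h | h)
            · exact hab1 h
            · exact hna1 h
          have hnin2 : (Quot.out e1).1 ∉ insert (Quot.out e1).2 W2 := by
            rw [Finset.mem_insert]
            rintro (h | h)
            · exact hab1 h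
            · exact hna2 h
          rw [Finset.erase_insert hnin1, Finset.erase_insert hnin2,
            Finset.erase_insert hnb1, Finset.erase_insert hnb2] at h1'
          exact h1'

        subst hW12; rfl
      · rintro ⟨W, e⟩ hp
        simp only [Finset.mem_sigma] at hp
        dsimp only
        rw [hdeg W e]
      · rintro ⟨U, e⟩ hp
        simp only [Finset.mem_sigma] at hp
        exact nonneg_on_theta hp.1
    refine hmid.trans ?_
    rw [Finset.mul_sum]
    apply Finset.sum_le_sum
    intro U hU
    rw [Finset.sum_const, nsmul_eq_mul]
    refine mul_le_mul_of_nonneg_right ?_ (nonneg_on_theta hU)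
    have h1 : (inducedEdges E U).card ≤ (U.card).choose 2 := iG_le_choose hEd U
    rw [(mem_theta'.mp hU).2.1] at h1
    exact_mod_cast h1
  -- final assembly
  have hNcard : (1:ℤ) ≤ ((theta V 𝒳 k).card : ℤ) := by
    exact_mod_cast Finset.card_pos.mpr hne
  have hd4 := mul_le_mul_of_nonneg_left hstep4 (show (0:ℤ) ≤ (d:ℤ) by positivity)
  rw [hsplit] at hglob
  have hiden := congrArg (Nat.cast : ℕ → ℤ) (choose_identity (show k ≤ d by omega))
  push_cast at hiden hpart1
  have hiden2 : (((d+1).choose 2 : ℤ) + (k.choose 2 : ℤ))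
        * (∑ U ∈ theta V 𝒳 k, ((degX 𝒳 U : ℤ) - 1))
      = (((d+1-k).choose 2 : ℤ) + (d : ℤ) * k)
        * (∑ U ∈ theta V 𝒳 k, ((degX 𝒳 U : ℤ) - 1)) := by
    rw [hiden]
  rw [ha k (by omega), ha (k+1) (by omega), ha (k+2) (by omega)]
  linarith [hglob, hd4, hpart0, hpart1, hpart2, hNcard, hiden2]
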